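/- Let H be a real Hilbert space, D a positive integer, and B ∈ ℝ^{D×D} symmetric positive definite. Equip tuples F : Fin D → H with the inner product ⟨F, G⟩_B := Σ_{i,j} (B⁻¹)_{ij} ⟪F_i, G_j⟫_H. Fix ε ∈ H and d ∈ Fin D, and let E : Fin D → H be given by E_i := B_{id} • ε. Then the worst-case value of the d-th error functional over the B-unit ball satisfies sup_{F : ‖F‖_B ≤ 1} | ⟨F, E⟩_B | = √(Σ_{i,j} (B⁻¹)_{ij} B_{id} B_{jd}) · ‖ε‖_H. In particular, with ε = m − Σ_{j=1}^N w_j k(x_j) the error representer of a scalar quadrature rule, the worst-case integration error of output d for multi-output Bayesian quadrature with separable kernel C = B c and common design equals √(Σ_{i,j} (B⁻¹)_{ij} B_{id} B_{jd}) times the scalar worst-case error, so both converge at the same rate in N. -/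

import Mathlib

open Matrix
open scoped RealInnerProductSpace

section Aux

variable {H : Type*} [NormedAddCommGroup H] [InnerProductSpace ℝ H] {D : ℕ}

private lemma mobq_quad_nonneg {M : Matrix (Fin D) (Fin D) ℝ} (hM : M.PosSemidef)
    (G : Fin D → H) : 0 ≤ ∑ i, ∑ j, M i j * ⟪G i, G j⟫ := by
  obtain ⟨A, hA⟩ : ∃ A : Matrix (Fin D) (Fin D) ℝ, M = Aᴴ * A := by
    open scoped MatrixOrder in
    obtain ⟨X, hX, -, rfl⟩ := CFC.exists_sqrt_of_isSelfAdjoint_of_quasispectrumRestricts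
      hM.isHermitian (QuasispectrumRestricts.nnreal_of_nonneg hM.nonneg)
    exact ⟨X, by rw [← Matrix.star_eq_conjTranspose, hX.star_eq]⟩
  have key : ∑ i, ∑ j, M i j * ⟪G i, G j⟫
      = ∑ k, ⟪∑ i, A k i • G i, ∑ j, A k j • G j⟫ := by
    simp only [sum_inner, inner_sum, real_inner_smul_left, real_inner_smul_right, hA,
      Matrix.mul_apply, Matrix.conjTranspose_apply, star_trivial, Finset.sum_mul]
    refine (Finset.sum_congr rfl fun i _ => Finset.sum_comm).trans ?_
    rw [Finset.sum_comm]
    refine Finset.sum_congr rfl fun k _ => Finset.sum_congr rfl fun i _ =>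
      Finset.sum_congr rfl fun j _ => ?_
    rw [real_inner_comm, mul_assoc]
  rw [key]
  exact Finset.sum_nonneg fun k _ => real_inner_self_nonneg

private lemma mobq_quad_cs {M : Matrix (Fin D) (Fin D) ℝ} (hM : M.PosSemidef)
    (F G : Fin D → H) :
    (∑ i, ∑ j, M i j * ⟪F i, G j⟫) ^ 2
      ≤ (∑ i, ∑ j, M i j * ⟪F i, F j⟫) * (∑ i, ∑ j, M i j * ⟪G i, G j⟫) := by
  have hMsym : ∀ i j, M i j = M j i := fun i j => by
    conv_rhs => rw [← hM.1]
    simp [Matrix.conjTranspose_apply]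
  have hsym : ∑ i, ∑ j, M i j * ⟪G i, F j⟫ = ∑ i, ∑ j, M i j * ⟪F i, G j⟫ := by
    rw [Finset.sum_comm]
    exact Finset.sum_congr rfl fun i _ => Finset.sum_congr rfl fun j _ => by
      rw [real_inner_comm, hMsym i j]
  have hquad : ∀ t : ℝ,
      0 ≤ (∑ i, ∑ j, M i j * ⟪G i, G j⟫) * (t * t)
        + (2 * ∑ i, ∑ j, M i j * ⟪F i, G j⟫) * t + ∑ i, ∑ j, M i j * ⟪F i, F j⟫ := by
    intro t
    have h1 : ∀ a x : ℝ, a * (t * x) = t * (a * x) := fun a x => by ring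
    have expand : (∑ i, ∑ j, M i j * ⟪G i, G j⟫) * (t * t)
        + (2 * ∑ i, ∑ j, M i j * ⟪F i, G j⟫) * t + ∑ i, ∑ j, M i j * ⟪F i, F j⟫
        = ∑ i, ∑ j, M i j * ⟪F i + t • G i, F j + t • G j⟫ := by
      simp only [inner_add_left, inner_add_right, real_inner_smul_left, real_inner_smul_right,
        mul_add, Finset.sum_add_distrib, h1, ← Finset.mul_sum, hsym]
      ring
    rw [expand]
    exact mobq_quad_nonneg hM _
  have hd := discrim_le_zero hquad
  rw [discrim] at hd
  nlinarith [hd]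

end Aux

/-- Worst-case error of output `d` in multi-output Bayesian quadrature with separable
kernel: on tuples `Fin D → H` with the inner product
`⟨F, G⟩_B = ∑ i j, (B⁻¹) i j * ⟪F i, G j⟫` (for `B` symmetric positive definite),
the supremum over the `B`-unit ball of `|⟨F, E⟩_B|` with `E i = B i d • ε` equals
`√(∑ i j, (B⁻¹) i j * B i d * B j d) * ‖ε‖`. -/
theorem separable_kernel_worst_case_error_factor
    {H : Type*} [NormedAddCommGroup H] [InnerProductSpace ℝ H] [CompleteSpace H]
    (D : ℕ) (hD : 0 < D) (B : Matrix (Fin D) (Fin D) ℝ) (hB : B.PosDef)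
    (ε : H) (d : Fin D) :
    (⨆ F : {F : Fin D → H // (∑ i, ∑ j, B⁻¹ i j * ⟪F i, F j⟫) ≤ 1},
        |∑ i, ∑ j, B⁻¹ i j * ⟪(F : Fin D → H) i, B j d • ε⟫|)
      = Real.sqrt (∑ i, ∑ j, B⁻¹ i j * B i d * B j d) * ‖ε‖ := by
  have hBinv : (B⁻¹).PosSemidef := hB.inv.posSemidef
  have hmul : B⁻¹ * B = 1 :=
    Matrix.nonsing_inv_mul B ((Matrix.isUnit_iff_isUnit_det _).mp hB.isUnit)
  have hcol : ∀ i, ∑ j, B⁻¹ i j * B j d = if i = d then 1 else 0 := by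
    intro i
    have := congrFun (congrFun hmul i) d
    simpa [Matrix.mul_apply, Matrix.one_apply] using this
  -- the RHS sum equals `B d d`
  have hrhs : ∑ i, ∑ j, B⁻¹ i j * B i d * B j d = B d d := by
    have : ∀ i, ∑ j, B⁻¹ i j * B i d * B j d = (∑ j, B⁻¹ i j * B j d) * B i d := by
      intro i
      rw [Finset.sum_mul]
      exact Finset.sum_congr rfl fun j _ => by ring
    simp only [this, hcol]
    simp
  -- the pairing with E simplifies to `⟪F d, ε⟫`
  have hbody : ∀ F : Fin D → H,
      ∑ i, ∑ j, B⁻¹ i j * ⟪F i, B j d • ε⟫ = ⟪F d, ε⟫ := by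
    intro F
    have : ∀ i, ∑ j, B⁻¹ i j * ⟪F i, B j d • ε⟫ = (∑ j, B⁻¹ i j * B j d) * ⟪F i, ε⟫ := by
      intro i
      rw [Finset.sum_mul]
      refine Finset.sum_congr rfl fun j _ => ?_
      rw [real_inner_smul_right]; ring
    simp only [this, hcol]
    simp
  have hBdd : 0 < B d d := by
    have := hB.dotProduct_mulVec_pos (x := Pi.single d 1)
      (fun h => one_ne_zero (α := ℝ) (by simpa using congrFun h d))
    simpa [Matrix.mulVec, dotProduct, Pi.single_apply, Finset.sum_ite_eq] using this
  -- the tuple E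
  set E : Fin D → H := fun i => B i d • ε with hE
  have hEE : ∑ i, ∑ j, B⁻¹ i j * ⟪E i, E j⟫ = B d d * ‖ε‖ ^ 2 := by
    have := hbody E
    simp only [hE] at this ⊢
    rw [this, real_inner_smul_left, real_inner_self_eq_norm_sq]
  set c : ℝ := Real.sqrt (B d d) * ‖ε‖ with hc
  have hcnn : 0 ≤ c := mul_nonneg (Real.sqrt_nonneg _) (norm_nonneg _)
  have hcsq : c * c = B d d * ‖ε‖ ^ 2 := by
    rw [hc]
    have : Real.sqrt (B d d) * Real.sqrt (B d d) = B d d :=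
      Real.mul_self_sqrt hBdd.le
    nlinarith [this]
  -- uniform bound
  have hbound : ∀ F : {F : Fin D → H // (∑ i, ∑ j, B⁻¹ i j * ⟪F i, F j⟫) ≤ 1},
      |∑ i, ∑ j, B⁻¹ i j * ⟪(F : Fin D → H) i, B j d • ε⟫| ≤ c := by
    rintro ⟨F, hF⟩
    have hcs := mobq_quad_cs hBinv F E
    have hFE : ∑ i, ∑ j, B⁻¹ i j * ⟪F i, E j⟫ = ⟪F d, ε⟫ := hbody F
    have hFF0 : 0 ≤ ∑ i, ∑ j, B⁻¹ i j * ⟪F i, F j⟫ := mobq_quad_nonneg hBinv F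
    have hsq : (∑ i, ∑ j, B⁻¹ i j * ⟪F i, E j⟫) ^ 2 ≤ B d d * ‖ε‖ ^ 2 := by
      calc (∑ i, ∑ j, B⁻¹ i j * ⟪F i, E j⟫) ^ 2
          ≤ (∑ i, ∑ j, B⁻¹ i j * ⟪F i, F j⟫) * (∑ i, ∑ j, B⁻¹ i j * ⟪E i, E j⟫) := hcs
        _ ≤ 1 * (∑ i, ∑ j, B⁻¹ i j * ⟪E i, E j⟫) := by
            refine mul_le_mul_of_nonneg_right hF ?_
            rw [hEE]; positivity
        _ = B d d * ‖ε‖ ^ 2 := by rw [one_mul, hEE]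
    have h1 : |∑ i, ∑ j, B⁻¹ i j * ⟪F i, E j⟫| ≤ c := by
      rw [← Real.sqrt_sq_eq_abs]
      calc Real.sqrt ((∑ i, ∑ j, B⁻¹ i j * ⟪F i, E j⟫) ^ 2)
          ≤ Real.sqrt (B d d * ‖ε‖ ^ 2) := Real.sqrt_le_sqrt hsq
        _ = c := by
            rw [← hcsq]; exact Real.sqrt_mul_self hcnn
    simpa [hE] using h1
  have hne : Nonempty {F : Fin D → H // (∑ i, ∑ j, B⁻¹ i j * ⟪F i, F j⟫) ≤ 1} :=
    ⟨⟨0, by simp⟩⟩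
  have hbdd : BddAbove (Set.range fun F : {F : Fin D → H //
      (∑ i, ∑ j, B⁻¹ i j * ⟪F i, F j⟫) ≤ 1} =>
      |∑ i, ∑ j, B⁻¹ i j * ⟪(F : Fin D → H) i, B j d • ε⟫|) := by
    refine ⟨c, ?_⟩
    rintro x ⟨F, rfl⟩
    exact hbound F
  rw [hrhs]
  refine le_antisymm (ciSup_le hbound) ?_
  by_cases hε : ε = 0
  · subst hε
    obtain ⟨F⟩ := hne
    simp only [norm_zero, mul_zero]
    exact le_trans (abs_nonneg _) (le_ciSup hbdd F)
  · have hεn : 0 < ‖ε‖ := norm_pos_iff.mpr hε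
    have hcpos : 0 < c := mul_pos (Real.sqrt_pos.mpr hBdd) hεn
    -- witness
    set F₀ : Fin D → H := fun i => (c⁻¹ * B i d) • ε with hF₀
    have hF₀mem : (∑ i, ∑ j, B⁻¹ i j * ⟪F₀ i, F₀ j⟫) ≤ 1 := by
      have heq : ∑ i, ∑ j, B⁻¹ i j * ⟪F₀ i, F₀ j⟫
          = (c⁻¹ * c⁻¹) * ∑ i, ∑ j, B⁻¹ i j * ⟪E i, E j⟫ := by
        simp only [hF₀, hE, real_inner_smul_left, real_inner_smul_right, Finset.mul_sum]
        refine Finset.sum_congr rfl fun i _ => Finset.sum_congr rfl fun j _ => ?_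
        ring
      rw [heq, hEE, ← hcsq]
      have : c⁻¹ * c⁻¹ * (c * c) = 1 := by
        field_simp
      rw [this]
    have hF₀val : |∑ i, ∑ j, B⁻¹ i j * ⟪F₀ i, B j d • ε⟫| = c := by
      rw [hbody F₀]
      have : ⟪F₀ d, ε⟫ = c⁻¹ * (B d d * ‖ε‖ ^ 2) := by
        simp only [hF₀, real_inner_smul_left, real_inner_self_eq_norm_sq]
        ring
      rw [this, ← hcsq]
      have h2 : c⁻¹ * (c * c) = c := by field_simp
      rw [h2, abs_of_nonneg hcpos.le]
    calc c = |∑ i, ∑ j, B⁻¹ i j * ⟪((⟨F₀, hF₀mem⟩ : {F : Fin D → H //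
            (∑ i, ∑ j, B⁻¹ i j * ⟪F i, F j⟫) ≤ 1}) : Fin D → H) i, B j d • ε⟫| :=
          hF₀val.symm
      _ ≤ _ := le_ciSup hbdd _
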